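/- arXiv:1608.00209 — 9 statements merged into one kernel-verified Lean document; each statement's English description precedes it below -/
import Mathlib

section
/- For nonnegative reals M1 ≥ M2 ≥ M3 with M1 ≤ M2 + M3, the allocation M_T1 = M1, M_R1 = 0, M_T2 = M_T3 = (M2+M3−M1)/3, M_R2 = (M1+2M2−M3)/3, M_R3 = (M1+2M3−M2)/3 is feasible (all values nonnegative, M_Tℓ + M_Rℓ = Mℓ for ℓ = 1,2,3) and attains the value M1 + (M2+M3−M1)/3 for the objective d = min{M_T1+M_T2+M_T3, M_R1+M_R2+M_R3, max{M_R2,M_T3}+max{M_R3,M_T2}, max{M_R2,M_T1}+max{M_R1,M_T2}, max{M_R3,M_T1}+max{M_R1,M_T3}}. -/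
/-- feasibility and value of the allocation for the unicast case
when `M1 ≤ M2 + M3`. -/
theorem stmt_0 (M1 M2 M3 : ℝ) (h1 : 0 ≤ M3) (h2 : M3 ≤ M2) (h3 : M2 ≤ M1)
    (h4 : M1 ≤ M2 + M3) :
    let MT1 := M1; let MR1 := (0 : ℝ)
    let MT2 := (M2 + M3 - M1) / 3; let MR2 := (M1 + 2 * M2 - M3) / 3
    let MT3 := (M2 + M3 - M1) / 3; let MR3 := (M1 + 2 * M3 - M2) / 3
    (0 ≤ MT1 ∧ 0 ≤ MR1 ∧ 0 ≤ MT2 ∧ 0 ≤ MR2 ∧ 0 ≤ MT3 ∧ 0 ≤ MR3) ∧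
    (MT1 + MR1 = M1 ∧ MT2 + MR2 = M2 ∧ MT3 + MR3 = M3) ∧
    min (min (min (min (MT1 + MT2 + MT3) (MR1 + MR2 + MR3))
          (max MR2 MT3 + max MR3 MT2))
        (max MR2 MT1 + max MR1 MT2))
      (max MR3 MT1 + max MR1 MT3)
      = M1 + (M2 + M3 - M1) / 3 := by
  intro MT1 MR1 MT2 MR2 MT3 MR3
  refine ⟨⟨by linarith, le_refl _, by simp only [MT2]; linarith,
      by simp only [MR2]; linarith, by simp only [MT3]; linarith,
      by simp only [MR3]; linarith⟩,
    ⟨by simp only [MT1, MR1]; ring, by simp only [MT2, MR2]; ring,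
      by simp only [MT3, MR3]; ring⟩, ?_⟩
  have hA : max MR2 MT3 = MR2 := max_eq_left (by simp only [MR2, MT3]; linarith)
  have hB : max MR3 MT2 = MR3 := max_eq_left (by simp only [MR3, MT2]; linarith)
  have hC : max MR2 MT1 = MT1 := max_eq_right (by simp only [MR2, MT1]; linarith)
  have hD : max MR1 MT2 = MT2 := max_eq_right (by simp only [MR1, MT2]; linarith)
  have hE : max MR3 MT1 = MT1 := max_eq_right (by simp only [MR3, MT1]; linarith)
  have hF : max MR1 MT3 = MT3 := max_eq_right (by simp only [MR1, MT3]; linarith)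
  rw [hA, hB, hC, hD, hE]
  have e2 : MR1 + MR2 + MR3 = M1 + (M2 + M3 - M1) / 3 := by
    simp only [MR1, MR2, MR3]; try ring
  have e3 : MR2 + MR3 = M1 + (M2 + M3 - M1) / 3 := by
    simp only [MR2, MR3]; try ring
  have e4 : MT1 + MT2 = M1 + (M2 + M3 - M1) / 3 := by
    simp only [MT1, MT2]; try ring
  have e5 : MT1 + MT3 = M1 + (M2 + M3 - M1) / 3 := by
    simp only [MT1, MT3]; try ring
  rw [e2, e3, e4]
  rw [min_eq_right (show M1 + (M2 + M3 - M1) / 3 ≤ M1 + (M2 + M3 - M1) / 3 + (M2 + M3 - M1) / 3 by linarith),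
    min_self, min_self, min_self]
end

section
/- For all nonnegative reals M1 ≥ M2 ≥ M3 with M1 ≤ M2 + M3, and for every choice of nonnegative M_Tℓ, M_Rℓ with M_Tℓ + M_Rℓ = Mℓ (ℓ = 1,2,3), the quantity min{M_T1+M_T2+M_T3, M_R1+M_R2+M_R3, max{M_R2,M_T3}+max{M_R3,M_T2}, max{M_R2,M_T1}+max{M_R1,M_T2}, max{M_R3,M_T1}+max{M_R1,M_T3}} is at most M1 + (M2+M3−M1)/3. -/
set_option maxHeartbeats 4000000 in
/-- converse of P1 in the regime `M1 ≤ M2 + M3`. -/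
theorem stmt_1 (M1 M2 M3 : ℝ) (h1 : 0 ≤ M3) (h2 : M3 ≤ M2) (h3 : M2 ≤ M1)
    (h4 : M1 ≤ M2 + M3)
    (MT1 MT2 MT3 MR1 MR2 MR3 : ℝ)
    (hT1 : 0 ≤ MT1) (hT2 : 0 ≤ MT2) (hT3 : 0 ≤ MT3)
    (hR1 : 0 ≤ MR1) (hR2 : 0 ≤ MR2) (hR3 : 0 ≤ MR3)
    (hM1 : MT1 + MR1 = M1) (hM2 : MT2 + MR2 = M2) (hM3 : MT3 + MR3 = M3) :
    min (min (min (min (MT1 + MT2 + MT3) (MR1 + MR2 + MR3))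
          (max MR2 MT3 + max MR3 MT2))
        (max MR2 MT1 + max MR1 MT2))
      (max MR3 MT1 + max MR1 MT3)
      ≤ M1 + (M2 + M3 - M1) / 3 := by
  by_contra hc
  push_neg at hc
  simp only [lt_min_iff] at hc
  obtain ⟨⟨⟨⟨hA, hB⟩, hC⟩, hD⟩, hE⟩ := hc
  rcases max_cases MR2 MT3 with ⟨e5, _⟩ | ⟨e5, _⟩ <;>
  rcases max_cases MR3 MT2 with ⟨e6, _⟩ | ⟨e6, _⟩ <;>
  rcases max_cases MR2 MT1 with ⟨e7, _⟩ | ⟨e7, _⟩ <;>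
  rcases max_cases MR1 MT2 with ⟨e8, _⟩ | ⟨e8, _⟩ <;>
  rcases max_cases MR3 MT1 with ⟨e9, _⟩ | ⟨e9, _⟩ <;>
  rcases max_cases MR1 MT3 with ⟨e10, _⟩ | ⟨e10, _⟩ <;>
  linarith
end

section
/- For all nonnegative reals M1 ≥ M2 ≥ M3 with M1 ≥ M2 + M3, and for every choice of nonnegative M_Tℓ, M_Rℓ with M_Tℓ + M_Rℓ = Mℓ (ℓ = 1,2,3), the quantity min{M_T1+M_T2+M_T3, M_R1+M_R2+M_R3, max{M_R2,M_T3}+max{M_R3,M_T2}, max{M_R2,M_T1}+max{M_R1,M_T2}, max{M_R3,M_T1}+max{M_R1,M_T3}} is at most M2 + M3, and this bound is attained by the allocation M_R1 = M2 + M3, M_R2 = M_R3 = 0. -/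
/-- P1 in the regime `M1 ≥ M2 + M3`: bound `M2 + M3` and its attainment. -/
theorem stmt_2 (M1 M2 M3 : ℝ) (h1 : 0 ≤ M3) (h2 : M3 ≤ M2) (h3 : M2 ≤ M1)
    (h4 : M2 + M3 ≤ M1) :
    (∀ MT1 MT2 MT3 MR1 MR2 MR3 : ℝ,
      0 ≤ MT1 → 0 ≤ MT2 → 0 ≤ MT3 → 0 ≤ MR1 → 0 ≤ MR2 → 0 ≤ MR3 →
      MT1 + MR1 = M1 → MT2 + MR2 = M2 → MT3 + MR3 = M3 →
      min (min (min (min (MT1 + MT2 + MT3) (MR1 + MR2 + MR3))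
            (max MR2 MT3 + max MR3 MT2))
          (max MR2 MT1 + max MR1 MT2))
        (max MR3 MT1 + max MR1 MT3)
        ≤ M2 + M3) ∧
    (let MR1 := M2 + M3; let MR2 := (0 : ℝ); let MR3 := (0 : ℝ)
     let MT1 := M1 - MR1; let MT2 := M2 - MR2; let MT3 := M3 - MR3
     min (min (min (min (MT1 + MT2 + MT3) (MR1 + MR2 + MR3))
           (max MR2 MT3 + max MR3 MT2))
         (max MR2 MT1 + max MR1 MT2))
       (max MR3 MT1 + max MR1 MT3)
       = M2 + M3) := by
  constructor
  · intro MT1 MT2 MT3 MR1 MR2 MR3 _ _ _ _ _ _ e1 e2 e3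
    have key : max MR2 MT3 + max MR3 MT2 ≤ M2 + M3 := by
      rcases le_total MR2 MT3 with ha | ha <;>
        rcases le_total MR3 MT2 with hb | hb <;>
        simp [max_eq_left, max_eq_right, ha, hb] <;> linarith
    exact le_trans (le_trans (min_le_left _ _)
      (le_trans (min_le_left _ _) (min_le_right _ _))) key
  · show min (min (min (min ((M1 - (M2+M3)) + (M2-0) + (M3-0)) ((M2+M3) + 0 + 0))
           (max 0 (M3-0) + max 0 (M2-0)))
         (max 0 (M1-(M2+M3)) + max (M2+M3) (M2-0)))
       (max 0 (M1-(M2+M3)) + max (M2+M3) (M3-0)) = M2 + M3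
    have hT1 : (0:ℝ) ≤ M1 - (M2 + M3) := by linarith
    rw [max_eq_right (by linarith : (0:ℝ) ≤ M3 - 0),
        max_eq_right (by linarith : (0:ℝ) ≤ M2 - 0),
        max_eq_right hT1,
        max_eq_left (by linarith : M2 - 0 ≤ M2 + M3),
        max_eq_left (by linarith : M3 - 0 ≤ M2 + M3)]
    rw [show M1 - (M2+M3) + (M2-0) + (M3-0) = M1 by ring,
        show M3 - 0 + (M2 - 0) = M2 + M3 by ring,
        show M1 - (M2+M3) + (M2+M3) = M1 by ring,
        show M2 + M3 + 0 + 0 = M2 + M3 by ring,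
        min_eq_right h4, min_self, min_eq_left h4, min_eq_left h4]
end

section
/- For nonnegative reals M1 ≥ M2 ≥ M3, the maximum over all feasible antenna allocations (M_Tℓ + M_Rℓ = Mℓ, all nonnegative) of min{M_T1+M_T2+M_T3, M_R1+M_R2+M_R3, max{M_R2,M_T3}+max{M_R3,M_T2}, max{M_R2,M_T1}+max{M_R1,M_T2}, max{M_R3,M_T1}+max{M_R1,M_T3}} equals min{M1 + (M2+M3−M1)/3, M2+M3}. -/
/-- Theorem 1 — the optimal total DoF of the unicast-only MIMO 3-way channel. -/
theorem stmt_3 (M1 M2 M3 : ℝ) (h1 : 0 ≤ M3) (h2 : M3 ≤ M2) (h3 : M2 ≤ M1) :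
    IsGreatest
      { d : ℝ | ∃ MT1 MT2 MT3 MR1 MR2 MR3 : ℝ,
          0 ≤ MT1 ∧ 0 ≤ MT2 ∧ 0 ≤ MT3 ∧ 0 ≤ MR1 ∧ 0 ≤ MR2 ∧ 0 ≤ MR3 ∧
          MT1 + MR1 = M1 ∧ MT2 + MR2 = M2 ∧ MT3 + MR3 = M3 ∧
          d = min (min (min (min (MT1 + MT2 + MT3) (MR1 + MR2 + MR3))
                (max MR2 MT3 + max MR3 MT2))
              (max MR2 MT1 + max MR1 MT2))
            (max MR3 MT1 + max MR1 MT3) }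
      (min (M1 + (M2 + M3 - M1) / 3) (M2 + M3)) := by
  constructor
  · -- membership
    rcases le_total M1 (M2 + M3) with hc | hc
    · -- case M1 ≤ M2 + M3 : use a = (M2+M3-M1)/3
      refine ⟨0, M2 - (M2+M3-M1)/3, M3 - (M2+M3-M1)/3, M1, (M2+M3-M1)/3, (M2+M3-M1)/3,
        le_refl 0, by linarith, by linarith, by linarith, by linarith, by linarith,
        by ring, by ring, by ring, ?_⟩
      apply le_antisymm
      · refine le_min (le_min (le_min (le_min ?_ ?_) ?_) ?_) ?_ <;>
        · have hm := min_le_left (M1 + (M2 + M3 - M1) / 3) (M2 + M3)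
          first
          | linarith
          | linarith [le_max_right ((M2+M3-M1)/3) (M3 - (M2+M3-M1)/3),
              le_max_right ((M2+M3-M1)/3) (M2 - (M2+M3-M1)/3),
              le_max_left ((M2+M3-M1)/3) (0:ℝ),
              le_max_left M1 (M2 - (M2+M3-M1)/3),
              le_max_left M1 (M3 - (M2+M3-M1)/3)]
      · have hT1 : min (min (min (min ((0:ℝ) + (M2 - (M2+M3-M1)/3) + (M3 - (M2+M3-M1)/3))
            (M1 + (M2+M3-M1)/3 + (M2+M3-M1)/3))
            (max ((M2+M3-M1)/3) (M3 - (M2+M3-M1)/3) + max ((M2+M3-M1)/3) (M2 - (M2+M3-M1)/3)))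
            (max ((M2+M3-M1)/3) (0:ℝ) + max M1 (M2 - (M2+M3-M1)/3)))
            (max ((M2+M3-M1)/3) (0:ℝ) + max M1 (M3 - (M2+M3-M1)/3))
            ≤ (0:ℝ) + (M2 - (M2+M3-M1)/3) + (M3 - (M2+M3-M1)/3) :=
          le_trans (min_le_left _ _) (le_trans (min_le_left _ _)
            (le_trans (min_le_left _ _) (min_le_left _ _)))
        refine le_min (by linarith) (by linarith)
    · -- case M2 + M3 ≤ M1
      refine ⟨M1 - M2 - M3, M2, M3, M2 + M3, 0, 0,
        by linarith, by linarith, h1, by linarith, le_refl 0, le_refl 0,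
        by ring, by ring, by ring, ?_⟩
      apply le_antisymm
      · refine le_min (le_min (le_min (le_min ?_ ?_) ?_) ?_) ?_ <;>
        · have hm := min_le_right (M1 + (M2 + M3 - M1) / 3) (M2 + M3)
          first
          | linarith
          | linarith [le_max_right (0:ℝ) M3, le_max_right (0:ℝ) M2,
              le_max_right (0:ℝ) (M1 - M2 - M3),
              le_max_left (M2+M3) M2, le_max_left (M2+M3) M3]
      · have hT2 : min (min (min (min ((M1 - M2 - M3) + M2 + M3)
            ((M2 + M3) + (0:ℝ) + (0:ℝ)))
            (max (0:ℝ) M3 + max (0:ℝ) M2))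
            (max (0:ℝ) (M1 - M2 - M3) + max (M2+M3) M2))
            (max (0:ℝ) (M1 - M2 - M3) + max (M2+M3) M3)
            ≤ (M2 + M3) + (0:ℝ) + (0:ℝ) :=
          le_trans (min_le_left _ _) (le_trans (min_le_left _ _)
            (le_trans (min_le_left _ _) (min_le_right _ _)))
        refine le_min (by linarith) (by linarith)
  · -- upper bound
    rintro d ⟨MT1, MT2, MT3, MR1, MR2, MR3, n1, n2, n3, n4, n5, n6, s1, s2, s3, rfl⟩
    have hA : min (min (min (min (MT1 + MT2 + MT3) (MR1 + MR2 + MR3))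
          (max MR2 MT3 + max MR3 MT2)) (max MR2 MT1 + max MR1 MT2))
          (max MR3 MT1 + max MR1 MT3) ≤ MT1 + MT2 + MT3 :=
      le_trans (min_le_left _ _) (le_trans (min_le_left _ _)
        (le_trans (min_le_left _ _) (min_le_left _ _)))
    have hB : min (min (min (min (MT1 + MT2 + MT3) (MR1 + MR2 + MR3))
          (max MR2 MT3 + max MR3 MT2)) (max MR2 MT1 + max MR1 MT2))
          (max MR3 MT1 + max MR1 MT3) ≤ MR1 + MR2 + MR3 :=
      le_trans (min_le_left _ _) (le_trans (min_le_left _ _)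
        (le_trans (min_le_left _ _) (min_le_right _ _)))
    have hC : min (min (min (min (MT1 + MT2 + MT3) (MR1 + MR2 + MR3))
          (max MR2 MT3 + max MR3 MT2)) (max MR2 MT1 + max MR1 MT2))
          (max MR3 MT1 + max MR1 MT3) ≤ max MR2 MT3 + max MR3 MT2 :=
      le_trans (min_le_left _ _) (le_trans (min_le_left _ _) (min_le_right _ _))
    have hD : min (min (min (min (MT1 + MT2 + MT3) (MR1 + MR2 + MR3))
          (max MR2 MT3 + max MR3 MT2)) (max MR2 MT1 + max MR1 MT2))
          (max MR3 MT1 + max MR1 MT3) ≤ max MR2 MT1 + max MR1 MT2 :=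
      le_trans (min_le_left _ _) (min_le_right _ _)
    have hE : min (min (min (min (MT1 + MT2 + MT3) (MR1 + MR2 + MR3))
          (max MR2 MT3 + max MR3 MT2)) (max MR2 MT1 + max MR1 MT2))
          (max MR3 MT1 + max MR1 MT3) ≤ max MR3 MT1 + max MR1 MT3 :=
      min_le_right _ _
    refine le_min ?_ ?_
    · rcases max_cases MR2 MT1 with ⟨e1, f1⟩ | ⟨e1, f1⟩ <;>
      rcases max_cases MR1 MT2 with ⟨e2, f2⟩ | ⟨e2, f2⟩ <;>
      rcases max_cases MR3 MT1 with ⟨e3, f3⟩ | ⟨e3, f3⟩ <;>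
      rcases max_cases MR1 MT3 with ⟨e4, f4⟩ | ⟨e4, f4⟩ <;>
      rcases max_cases MR2 MT3 with ⟨e5, f5⟩ | ⟨e5, f5⟩ <;>
      rcases max_cases MR3 MT2 with ⟨e6, f6⟩ | ⟨e6, f6⟩ <;>
      linarith
    · have m1 : max MR2 MT3 ≤ MR2 + MT3 := max_le (by linarith) (by linarith)
      have m2 : max MR3 MT2 ≤ MR3 + MT2 := max_le (by linarith) (by linarith)
      linarith
end

section
/- For nonnegative reals M1 ≥ M2 ≥ M3 and every feasible allocation M_Tℓ + M_Rℓ = Mℓ (all nonnegative), the quantity min{M_R1+M_R2+M_R3, M_T2+M_T3+M_R2+M_R3, M_R3+M_T1+M_T2+2M_T3, 2(M_T1+M_T2+M_T3)} is at most M2 + M3, and the allocation M_T1 = M1−M2, M_T2 = M2−M3, M_T3 = M3 achieves equality. -/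
/-- Lemma 2 (problem P2), unicast + broadcast case. -/
theorem stmt_8 (M1 M2 M3 : ℝ) (h1 : 0 ≤ M3) (h2 : M3 ≤ M2) (h3 : M2 ≤ M1) :
    (∀ MT1 MT2 MT3 MR1 MR2 MR3 : ℝ,
      0 ≤ MT1 → 0 ≤ MT2 → 0 ≤ MT3 → 0 ≤ MR1 → 0 ≤ MR2 → 0 ≤ MR3 →
      MT1 + MR1 = M1 → MT2 + MR2 = M2 → MT3 + MR3 = M3 →
      min (min (MR1 + MR2 + MR3) (MT2 + MT3 + MR2 + MR3))
          (min (MR3 + MT1 + MT2 + 2 * MT3) (2 * (MT1 + MT2 + MT3)))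
        ≤ M2 + M3) ∧
    (let MT1 := M1 - M2; let MT2 := M2 - M3; let MT3 := M3
     let MR1 := M1 - MT1; let MR2 := M2 - MT2; let MR3 := M3 - MT3
     min (min (MR1 + MR2 + MR3) (MT2 + MT3 + MR2 + MR3))
         (min (MR3 + MT1 + MT2 + 2 * MT3) (2 * (MT1 + MT2 + MT3)))
       = M2 + M3) := by
  constructor
  · intro MT1 MT2 MT3 MR1 MR2 MR3 _ _ _ _ _ _ e1 e2 e3
    calc min (min (MR1 + MR2 + MR3) (MT2 + MT3 + MR2 + MR3))
          (min (MR3 + MT1 + MT2 + 2 * MT3) (2 * (MT1 + MT2 + MT3)))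
        ≤ min (MR1 + MR2 + MR3) (MT2 + MT3 + MR2 + MR3) := min_le_left _ _
      _ ≤ MT2 + MT3 + MR2 + MR3 := min_le_right _ _
      _ ≤ M2 + M3 := by linarith
  · simp only
    refine le_antisymm (le_trans (min_le_left _ _) (le_trans (min_le_right _ _) (by linarith))) ?_
    refine le_min (le_min (by linarith) (by linarith)) (le_min (by linarith) (by linarith))
end

section
/- For nonnegative reals M1 ≥ M2 ≥ M3, the maximum over all feasible allocations (M_Tℓ + M_Rℓ = Mℓ, all nonnegative) of min{M_R1+M_R2+M_R3, M_T2+M_T3+M_R2+M_R3, M_R3+M_T1+M_T2+2M_T3, 2(M_T1+M_T2+M_T3)} equals M2 + M3. -/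
/-- Theorem 2 — optimal total DoF with unicast and broadcast messages. -/
theorem stmt_9 (M1 M2 M3 : ℝ) (h1 : 0 ≤ M3) (h2 : M3 ≤ M2) (h3 : M2 ≤ M1) :
    IsGreatest
      { d : ℝ | ∃ MT1 MT2 MT3 MR1 MR2 MR3 : ℝ,
          0 ≤ MT1 ∧ 0 ≤ MT2 ∧ 0 ≤ MT3 ∧ 0 ≤ MR1 ∧ 0 ≤ MR2 ∧ 0 ≤ MR3 ∧
          MT1 + MR1 = M1 ∧ MT2 + MR2 = M2 ∧ MT3 + MR3 = M3 ∧
          d = min (min (MR1 + MR2 + MR3) (MT2 + MT3 + MR2 + MR3))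
                (min (MR3 + MT1 + MT2 + 2 * MT3) (2 * (MT1 + MT2 + MT3))) }
      (M2 + M3) := by
  constructor
  · exact ⟨M2, 0, 0, M1 - M2, M2, M3, by linarith, le_refl 0, le_refl 0, by linarith,
      by linarith, h1, by ring, by ring, by ring, by
        have hA : min ((M1 - M2) + M2 + M3) (0 + 0 + M2 + M3) = M2 + M3 := by
          rw [min_eq_right] <;> linarith
        have hB : min (M3 + M2 + 0 + 2 * 0) (2 * (M2 + 0 + 0)) = M3 + M2 := by
          rw [min_eq_left] <;> linarith
        rw [hA, hB, min_eq_left] <;> linarith⟩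
  · rintro d ⟨MT1, MT2, MT3, MR1, MR2, MR3, _, _, _, _, _, _, e1, e2, e3, rfl⟩
    calc min (min (MR1 + MR2 + MR3) (MT2 + MT3 + MR2 + MR3))
          (min (MR3 + MT1 + MT2 + 2 * MT3) (2 * (MT1 + MT2 + MT3)))
        ≤ MT2 + MT3 + MR2 + MR3 := le_trans (min_le_left _ _) (min_le_right _ _)
      _ = M2 + M3 := by linarith
end

section
/- The optimization problem: maximize d subject to 0 ≤ d ≤ M2+M3, max{d−M3, d/2} ≤ M_T1+M_T2+M_T3 ≤ M1+M2+M3−d, and 0 ≤ M_Tℓ ≤ Mℓ (ℓ = 1,2,3), where M1 ≥ M2 ≥ M3 ≥ 0, has optimal value d* = M2+M3; moreover d = M2+M3 is feasible if and only if M2 ≤ M_T1+M_T2+M_T3 ≤ M1. -/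
/-- problem P8 from Appendix B. -/
theorem stmt_10 (M1 M2 M3 : ℝ) (h1 : 0 ≤ M3) (h2 : M3 ≤ M2) (h3 : M2 ≤ M1) :
    IsGreatest
      { d : ℝ | ∃ MT1 MT2 MT3 : ℝ,
          0 ≤ d ∧ d ≤ M2 + M3 ∧
          max (d - M3) (d / 2) ≤ MT1 + MT2 + MT3 ∧
          MT1 + MT2 + MT3 ≤ M1 + M2 + M3 - d ∧
          0 ≤ MT1 ∧ MT1 ≤ M1 ∧ 0 ≤ MT2 ∧ MT2 ≤ M2 ∧ 0 ≤ MT3 ∧ MT3 ≤ M3 }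
      (M2 + M3) ∧
    (∀ MT1 MT2 MT3 : ℝ,
      0 ≤ MT1 → MT1 ≤ M1 → 0 ≤ MT2 → MT2 ≤ M2 → 0 ≤ MT3 → MT3 ≤ M3 →
      ((0 ≤ M2 + M3 ∧ max ((M2 + M3) - M3) ((M2 + M3) / 2) ≤ MT1 + MT2 + MT3 ∧
          MT1 + MT2 + MT3 ≤ M1 + M2 + M3 - (M2 + M3)) ↔
        (M2 ≤ MT1 + MT2 + MT3 ∧ MT1 + MT2 + MT3 ≤ M1))) := by
  constructor
  · constructor
    · exact ⟨M2, 0, 0, by linarith, le_refl _, by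
        simp only [max_le_iff]; exact ⟨by linarith, by linarith⟩, by linarith,
        by linarith, h3, le_refl _, by linarith, le_refl _, h1⟩
    · rintro d ⟨MT1, MT2, MT3, _, hd, _⟩
      exact hd
  · intro MT1 MT2 MT3 a b c dd e f
    constructor
    · rintro ⟨_, hmax, hup⟩
      have := le_trans (le_max_left _ _) hmax
      constructor <;> linarith
    · rintro ⟨hlo, hup⟩
      refine ⟨by linarith, max_le (by linarith) (by linarith), by linarith⟩
end

section
/- The linear program: maximize d over nonnegative reals d, M_R1, M_R2, M_R3 subject to d ≤ M_R2+M_R3, d ≤ M1+M2−M_R1−M_R2, d ≤ M1+M3−M_R1−M_R3, M_Rℓ ≤ Mℓ (ℓ = 1,2,3), M_R2 ≥ M3−M_R3, M_R3 ≥ M2−M_R2, M1−M_R1 ≥ M_R2, M2−M_R2 ≥ M_R1, M1−M_R1 ≥ M_R3, M3−M_R3 ≥ M_R1, where M1 ≥ M2 ≥ M3 ≥ 0 and M1 ≤ M2+M3, has optimal value (2M1+M2+M3)/3, attained at (d, M_R1, M_R2, M_R3) = ((2M1+M2+M3)/3, 0, (M1+2M2−M3)/3, (M1+2M3−M2)/3).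 -/
/-- problem P4 from Appendix A, with its optimal value and optimizer. -/
theorem stmt_11 (M1 M2 M3 : ℝ) (h1 : 0 ≤ M3) (h2 : M3 ≤ M2) (h3 : M2 ≤ M1)
    (h4 : M1 ≤ M2 + M3) :
    IsGreatest
      { d : ℝ | ∃ MR1 MR2 MR3 : ℝ,
          0 ≤ d ∧ 0 ≤ MR1 ∧ 0 ≤ MR2 ∧ 0 ≤ MR3 ∧
          d ≤ MR2 + MR3 ∧
          d ≤ M1 + M2 - MR1 - MR2 ∧
          d ≤ M1 + M3 - MR1 - MR3 ∧
          MR1 ≤ M1 ∧ MR2 ≤ M2 ∧ MR3 ≤ M3 ∧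
          M3 - MR3 ≤ MR2 ∧ M2 - MR2 ≤ MR3 ∧
          MR2 ≤ M1 - MR1 ∧ MR1 ≤ M2 - MR2 ∧
          MR3 ≤ M1 - MR1 ∧ MR1 ≤ M3 - MR3 }
      ((2 * M1 + M2 + M3) / 3) ∧
    (let d := (2 * M1 + M2 + M3) / 3
     let MR1 := (0 : ℝ); let MR2 := (M1 + 2 * M2 - M3) / 3
     let MR3 := (M1 + 2 * M3 - M2) / 3
     0 ≤ d ∧ 0 ≤ MR1 ∧ 0 ≤ MR2 ∧ 0 ≤ MR3 ∧
     d ≤ MR2 + MR3 ∧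
     d ≤ M1 + M2 - MR1 - MR2 ∧
     d ≤ M1 + M3 - MR1 - MR3 ∧
     MR1 ≤ M1 ∧ MR2 ≤ M2 ∧ MR3 ≤ M3 ∧
     M3 - MR3 ≤ MR2 ∧ M2 - MR2 ≤ MR3 ∧
     MR2 ≤ M1 - MR1 ∧ MR1 ≤ M2 - MR2 ∧
     MR3 ≤ M1 - MR1 ∧ MR1 ≤ M3 - MR3) := by
  constructor
  · constructor
    · exact ⟨0, (M1 + 2 * M2 - M3) / 3, (M1 + 2 * M3 - M2) / 3, by norm_num; constructorm* _ ∧ _ <;> linarith⟩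
    · rintro d ⟨MR1, MR2, MR3, hd, hr1, hr2, hr3, c1, c2, c3, _⟩
      linarith
  · norm_num
    constructorm* _ ∧ _ <;> linarith
end

section
/- For the linear program of problem P4, the dual multiplier assignment λ1 = λ2 = λ3 = 1/3, λ8 = 2/3 (all other multipliers zero) is dual feasible and yields dual objective value (2M1+M2+M3)/3, so strong duality certifies that (2M1+M2+M3)/3 is the optimal value. -/
open Matrix

/-- The constraint matrix `A` of problem P5 (matrix form of P4). -/
noncomputable def matA : Matrix (Fin 17) (Fin 4) ℝ :=
  !![ 1,  0, -1, -1;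
      1,  1,  1,  0;
      1,  1,  0,  1;
      0,  1,  0,  0;
      0,  0,  1,  0;
      0,  0,  0,  1;
     -1,  0,  0,  0;
      0, -1,  0,  0;
      0,  0, -1,  0;
      0,  0,  0, -1;
      0,  0, -1, -1;
      0,  0, -1, -1;
      0,  1,  1,  0;
      0,  1,  1,  0;
      0,  1,  0,  1;
      0,  1,  0,  1;
      0,  0,  0,  0]

/-- The right-hand-side vector `b` of problem P5. -/
noncomputable def vecB (M1 M2 M3 : ℝ) : Fin 17 → ℝ :=
  ![0, M1 + M2, M1 + M3, M1, M2, M3, 0, 0, 0, 0,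
    -M3, -M2, M1, M2, M1, M3, M2 + M3 - M1]

/-- The cost vector `c` of problem P5. -/
noncomputable def vecC : Fin 4 → ℝ := ![-1, 0, 0, 0]

/-- The dual multipliers: `λ1 = λ2 = λ3 = 1/3`, `λ8 = 2/3`, all others zero. -/
noncomputable def vecLam : Fin 17 → ℝ :=
  ![1/3, 1/3, 1/3, 0, 0, 0, 0, 2/3, 0, 0, 0, 0, 0, 0, 0, 0, 0]

lemma my_cons_val_5 {α : Type*} {m : ℕ} (x : α) (u : Fin (m+5) → α) :
    Matrix.vecCons x u (5 : Fin (m+6)) = u 4 := rfl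

lemma my_cons_val_6 {α : Type*} {m : ℕ} (x : α) (u : Fin (m+6) → α) :
    Matrix.vecCons x u (6 : Fin (m+7)) = u 5 := rfl

lemma my_cons_val_7 {α : Type*} {m : ℕ} (x : α) (u : Fin (m+7) → α) :
    Matrix.vecCons x u (7 : Fin (m+8)) = u 6 := rfl

lemma my_cons_val_8 {α : Type*} {m : ℕ} (x : α) (u : Fin (m+8) → α) :
    Matrix.vecCons x u (8 : Fin (m+9)) = u 7 := rfl

lemma my_cons_val_9 {α : Type*} {m : ℕ} (x : α) (u : Fin (m+9) → α) :
    Matrix.vecCons x u (9 : Fin (m+10)) = u 8 := rfl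

lemma my_cons_val_10 {α : Type*} {m : ℕ} (x : α) (u : Fin (m+10) → α) :
    Matrix.vecCons x u (10 : Fin (m+11)) = u 9 := rfl

lemma my_cons_val_11 {α : Type*} {m : ℕ} (x : α) (u : Fin (m+11) → α) :
    Matrix.vecCons x u (11 : Fin (m+12)) = u 10 := rfl

lemma my_cons_val_12 {α : Type*} {m : ℕ} (x : α) (u : Fin (m+12) → α) :
    Matrix.vecCons x u (12 : Fin (m+13)) = u 11 := rfl

lemma my_cons_val_13 {α : Type*} {m : ℕ} (x : α) (u : Fin (m+13) → α) :
    Matrix.vecCons x u (13 : Fin (m+14)) = u 12 := rfl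

lemma my_cons_val_14 {α : Type*} {m : ℕ} (x : α) (u : Fin (m+14) → α) :
    Matrix.vecCons x u (14 : Fin (m+15)) = u 13 := rfl

lemma my_cons_val_15 {α : Type*} {m : ℕ} (x : α) (u : Fin (m+15) → α) :
    Matrix.vecCons x u (15 : Fin (m+16)) = u 14 := rfl

lemma my_cons_val_16 {α : Type*} {m : ℕ} (x : α) (u : Fin (m+16) → α) :
    Matrix.vecCons x u (16 : Fin (m+17)) = u 15 := rfl

/-- the LP duality certificate from Appendix A: the multiplier vector
is dual feasible, has dual objective value `(2M1+M2+M3)/3`, and hence strong duality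
certifies that `(2M1+M2+M3)/3` is the optimal value of P5 (maximizing `-cᵀv`). -/
theorem stmt_12 (M1 M2 M3 : ℝ) (h1 : 0 ≤ M3) (h2 : M3 ≤ M2) (h3 : M2 ≤ M1)
    (h4 : M1 ≤ M2 + M3) :
    (matA.transpose.mulVec vecLam + vecC = 0) ∧
    (∀ i, 0 ≤ vecLam i) ∧
    (vecB M1 M2 M3 ⬝ᵥ vecLam = (2 * M1 + M2 + M3) / 3) ∧
    IsGreatest { t : ℝ | ∃ v : Fin 4 → ℝ,
        (∀ i, matA.mulVec v i ≤ vecB M1 M2 M3 i) ∧ t = -(vecC ⬝ᵥ v) }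
      ((2 * M1 + M2 + M3) / 3) := by

  set d : ℝ := (2 * M1 + M2 + M3) / 3 with hd
  refine ⟨?_, ?_, ?_, ?_, ?_⟩
  · funext j
    fin_cases j <;>
      simp [matA, vecC, vecLam, Matrix.mulVec, Matrix.transpose, dotProduct,
        Fin.sum_univ_succ, my_cons_val_5, my_cons_val_6, my_cons_val_7, my_cons_val_8, my_cons_val_9, my_cons_val_10, my_cons_val_11, my_cons_val_12, my_cons_val_13, my_cons_val_14, my_cons_val_15, my_cons_val_16] <;> norm_num
  · intro i
    fin_cases i <;> norm_num [vecLam]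
  · simp [vecB, vecLam, dotProduct, Fin.sum_univ_succ]
    ring
  · -- membership
    refine ⟨![d, 0, M1 + M2 - d, M1 + M3 - d], ?_, ?_⟩
    · intro i
      fin_cases i <;>
        simp only [matA, vecB, Matrix.mulVec, dotProduct, Fin.sum_univ_succ,
          Fin.sum_univ_zero, Matrix.cons_val_zero, Matrix.cons_val_one,
          Matrix.cons_val_two, Matrix.cons_val_three, Matrix.cons_val_four,
          Matrix.head_cons, Matrix.vecHead, Matrix.vecTail, Matrix.of_apply,
          Function.comp, Matrix.cons_val_succ, Matrix.cons_val, my_cons_val_5, my_cons_val_6, my_cons_val_7, my_cons_val_8, my_cons_val_9, my_cons_val_10, my_cons_val_11, my_cons_val_12, my_cons_val_13, my_cons_val_14, my_cons_val_15, my_cons_val_16] <;>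
        · rw [hd]; simp [Matrix.vecHead, Matrix.vecTail] <;> linarith
    · simp [vecC, dotProduct, Fin.sum_univ_succ]
  · rintro t ⟨v, hv, rfl⟩
    have c0 := hv 0
    have c1 := hv 1
    have c2 := hv 2
    have c7 := hv 7
    simp [matA, vecB, Matrix.mulVec, dotProduct, Fin.sum_univ_succ, my_cons_val_5, my_cons_val_6, my_cons_val_7, my_cons_val_8, my_cons_val_9, my_cons_val_10, my_cons_val_11, my_cons_val_12, my_cons_val_13, my_cons_val_14, my_cons_val_15, my_cons_val_16] at c0 c1 c2 c7
    simp [vecC, dotProduct, Fin.sum_univ_succ]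
    linarith
end
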